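/- Let m ≡ 2 (mod 4) with m ≥ 6, n = 2^m − 1, and v = 2^{(m−4)/2} − 1. Then gcd(v, n) = 1, and for every integer a with 1 ≤ a ≤ 2^{(m−4)/2}, the binary weight of a·v equals (m−4)/2. -/

import Mathlib

def w2 (x : ℕ) : ℕ := (Nat.digits 2 x).sum

lemma w2_two (x : ℕ) : w2 x = x % 2 + w2 (x / 2) := by
  rcases Nat.eq_zero_or_pos x with rfl | hx
  · simp [w2]
  · unfold w2
    rw [Nat.digits_def' (by norm_num : 1 < 2) hx]
    simp

lemma w2_split (k : ℕ) : ∀ b c : ℕ, c < 2 ^ k → w2 (c + 2 ^ k * b) = w2 c + w2 b := by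
  induction k with
  | zero =>
    intro b c hc
    interval_cases c
    simp [w2]
  | succ k ih =>
    intro b c hc
    have h2 : (2:ℕ) ^ (k+1) * b = 2 * (2 ^ k * b) := by ring
    rw [h2]
    have hm : (c + 2 * (2 ^ k * b)) % 2 = c % 2 := by omega
    have hd : (c + 2 * (2 ^ k * b)) / 2 = c / 2 + 2 ^ k * b := by omega
    rw [w2_two (c + 2 * (2 ^ k * b)), hm, hd]
    have hp : (2:ℕ) ^ (k+1) = 2 * 2 ^ k := by ring
    have hc2 : c / 2 < 2 ^ k := by omega
    rw [ih b (c / 2) hc2, w2_two c]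
    omega

lemma w2_compl (k : ℕ) : ∀ b : ℕ, b < 2 ^ k → w2 b + w2 (2 ^ k - 1 - b) = k := by
  induction k with
  | zero =>
    intro b hb
    interval_cases b
    simp [w2]
  | succ k ih =>
    intro b hb
    have hp : (2:ℕ) ^ (k+1) = 2 * 2 ^ k := by ring
    have hm : (2 ^ (k+1) - 1 - b) % 2 = 1 - b % 2 := by omega
    have hd : (2 ^ (k+1) - 1 - b) / 2 = 2 ^ k - 1 - b / 2 := by omega
    have hb2 : b / 2 < 2 ^ k := by omega
    have hih := ih (b / 2) hb2
    rw [w2_two b, w2_two (2 ^ (k+1) - 1 - b), hm, hd]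
    revert hih
    generalize w2 (b / 2) = x
    generalize w2 (2 ^ k - 1 - b / 2) = y
    intro hih
    omega

theorem stmt9 (m : ℕ) (hm : m % 4 = 2) (hm6 : 6 ≤ m)
    (n v : ℕ) (hn : n = 2 ^ m - 1) (hv : v = 2 ^ ((m - 4) / 2) - 1) :
    Nat.gcd v n = 1 ∧
    ∀ a : ℕ, 1 ≤ a → a ≤ 2 ^ ((m - 4) / 2) → w2 (a * v) = (m - 4) / 2 := by
  set K := (m - 4) / 2 with hK
  have hKm : Nat.gcd K m = 1 := by
    have hK' : 2 * K + 4 = m := by omega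
    set g := Nat.gcd K m with hg
    have h1 : g ∣ K := Nat.gcd_dvd_left _ _
    have h2 : g ∣ m := Nat.gcd_dvd_right _ _
    have h4 : g ∣ 4 := by
      have := Nat.dvd_sub h2 (h1.mul_left 2)
      have he : m - 2 * K = 4 := by omega
      rwa [he] at this
    have hodd : ¬ 2 ∣ g := by
      intro h
      have := h.trans h1
      omega
    have hgpos : 0 < g := Nat.gcd_pos_of_pos_right _ (by omega)
    have hg4 : g ≤ 4 := Nat.le_of_dvd (by norm_num) h4
    interval_cases g <;> omega
  have hKpos : 1 ≤ K := by omega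
  have hvpos : 1 ≤ (2:ℕ) ^ K := Nat.one_le_two_pow
  constructor
  · -- gcd part
    set d := Nat.gcd v n with hd
    have hdv : d ∣ 2 ^ K - 1 := hv ▸ Nat.gcd_dvd_left _ _
    have hdn : d ∣ 2 ^ m - 1 := hn ▸ Nat.gcd_dvd_right _ _
    have hdpos : 0 < d := by
      apply Nat.gcd_pos_of_pos_left
      have : (2:ℕ) ^ 1 ≤ 2 ^ K := Nat.pow_le_pow_right (by norm_num) hKpos
      omega
    haveI : NeZero d := ⟨by omega⟩
    have e1 : (2 : ZMod d) ^ K = 1 := by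
      have := (ZMod.natCast_eq_zero_iff _ d).mpr hdv
      push_cast [Nat.cast_sub hvpos] at this
      linear_combination this
    have e2 : (2 : ZMod d) ^ m = 1 := by
      have := (ZMod.natCast_eq_zero_iff _ d).mpr hdn
      push_cast [Nat.cast_sub (Nat.one_le_two_pow : 1 ≤ (2:ℕ)^m)] at this
      linear_combination this
    have e3 : (2 : ZMod d) ^ Nat.gcd K m = 1 := pow_gcd_eq_one.mpr ⟨e1, e2⟩
    rw [hKm, pow_one] at e3
    have e4 : ((1:ℕ) : ZMod d) = 0 := by
      push_cast
      linear_combination e3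
    have h5 := (ZMod.natCast_eq_zero_iff 1 d).mp e4
    exact Nat.dvd_one.mp h5
  · intro a ha1 ha2
    obtain ⟨b, rfl⟩ : ∃ b, a = 1 + b := ⟨a - 1, by omega⟩
    have hb : b < 2 ^ K := by omega
    have key : (1 + b) * v = (2 ^ K - 1 - b) + 2 ^ K * b := by
      rw [hv]
      have e1 : (1 + b) * (2 ^ K - 1) = 2 ^ K + 2 ^ K * b - (1 + b) := by
        rw [Nat.mul_sub, mul_one, add_mul, one_mul, mul_comm b]
      rw [e1]
      have hbq : b ≤ 2 ^ K * b := Nat.le_mul_of_pos_left b (by positivity)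
      revert hbq
      generalize 2 ^ K * b = q
      intro hbq
      omega
    rw [key, w2_split K b _ (by omega)]
    have := w2_compl K b hb
    omega
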